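/- Let X be a normal topological space and let K and L be topological spaces that are homotopy equivalent. Then X belongs to the class α(L) if and only if X belongs to the class α(K). -/

import Mathlib

open Set Topology

universe u v

/-- `e-dim X ≤ K`: `K` is an absolute extensor for `X`, i.e. every continuous map
from a closed subset of `X` into `K` extends continuously over all of `X`. -/
def EDimLE (X : Type u) (K : Type v) [TopologicalSpace X] [TopologicalSpace K] : Prop :=
  ∀ A : Set X, IsClosed A → ∀ f : A → K, Continuous f →
    ∃ g : X → K, Continuous g ∧ ∀ a : A, g a = f a

/-- `X ∈ α(K)`: every continuous map from a closed subset `A` of `X` into `K` that extends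
continuously over some open neighborhood of `A` extends continuously over all of `X`. -/
def MemAlpha (X : Type u) (K : Type v) [TopologicalSpace X] [TopologicalSpace K] : Prop :=
  ∀ A : Set X, IsClosed A → ∀ f : A → K, Continuous f →
    (∃ U : Set X, IsOpen U ∧ ∃ hAU : A ⊆ U, ∃ g : U → K, Continuous g ∧
      ∀ a : A, g ⟨a.1, hAU a.2⟩ = f a) →
    ∃ h : X → K, Continuous h ∧ ∀ a : A, h a = f a

/-- An open cover of `X`. -/
def IsOpenCover {X : Type u} [TopologicalSpace X] (ω : Set (Set X)) : Prop :=
  (∀ U ∈ ω, IsOpen U) ∧ ⋃₀ ω = univ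

/-- A locally finite open cover of `X`. -/
def IsLocallyFiniteOpenCover {X : Type u} [TopologicalSpace X] (ω : Set (Set X)) : Prop :=
  IsOpenCover ω ∧ LocallyFinite (fun U : ω => (U : Set X))

/-- `f` is an `ω`-map: there is an open cover `γ` of `Y` whose preimages refine `ω`. -/
def IsOmegaMap {X : Type u} {Y : Type v} [TopologicalSpace X] [TopologicalSpace Y]
    (f : X → Y) (ω : Set (Set X)) : Prop :=
  ∃ γ : Set (Set Y), IsOpenCover γ ∧ ∀ G ∈ γ, ∃ W ∈ ω, f ⁻¹' G ⊆ W

/-- `f` and `r` are `γ`-close: each pair `f x`, `r x` lies in a common member of `γ`. -/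
def AreGammaClose {X : Type u} {Y : Type v} (f r : X → Y) (γ : Set (Set Y)) : Prop :=
  ∀ x : X, ∃ G ∈ γ, f x ∈ G ∧ r x ∈ G

/-- A refinable map: a surjective continuous map such that for every locally finite open
cover `ω` of `X` and every open cover `γ` of `Y` there is a surjective `ω`-map `γ`-close
to `r`. -/
def IsRefinable {X : Type u} {Y : Type v} [TopologicalSpace X] [TopologicalSpace Y]
    (r : X → Y) : Prop :=
  Continuous r ∧ Function.Surjective r ∧
    ∀ ω : Set (Set X), IsLocallyFiniteOpenCover ω → ∀ γ : Set (Set Y), IsOpenCover γ →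
      ∃ f : X → Y, Continuous f ∧ Function.Surjective f ∧
        IsOmegaMap f ω ∧ AreGammaClose f r γ

namespace OldCW

open CategoryTheory Limits

/-- The `n`-disk (Mathlib, December 2024: `CWComplex.disk`). -/
noncomputable def disk (n : ℤ) : TopCat.{u} :=
  TopCat.of <| ULift <| Metric.closedBall (0 : EuclideanSpace ℝ <| Fin <| Int.toNat n) 1

/-- The `n`-sphere (Mathlib, December 2024: `CWComplex.sphere`). -/
noncomputable def sphere (n : ℤ) : TopCat.{u} :=
  TopCat.of <| ULift <| Metric.sphere (0 : EuclideanSpace ℝ <| Fin <| Int.toNat n) 1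

/-- The inclusion of the sphere into the disk. -/
noncomputable def sphereInclusion (n : ℤ) : sphere.{u} n ⟶ disk.{u} n :=
  TopCat.ofHom
    { toFun := fun p => ⟨⟨p.down.1, le_of_eq p.down.2⟩⟩
      continuous_toFun := by fun_prop }

/-- Attaching `n`-cells (Mathlib, December 2024: `CWComplex.AttachCells`). -/
structure AttachCells (n : ℤ) (X X' : TopCat.{u}) where
  cells : Type u
  attachMaps : cells → (sphere.{u} n ⟶ X)
  iso_pushout : X' ≅ Limits.pushout (Limits.Sigma.map fun _ : cells ↦ sphereInclusion.{u} n)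
    (Limits.Sigma.desc attachMaps)

/-- Relative CW-complexes (Mathlib, December 2024: `RelativeCWComplex`). -/
structure RelativeCWComplex where
  sk : ℕ → TopCat.{u}
  attachCells (n : ℕ) : OldCW.AttachCells.{u} ((n : ℤ) - 1) (sk n) (sk (n + 1))

/-- CW-complexes (Mathlib, December 2024: `CWComplex`). -/
structure CWComplex extends OldCW.RelativeCWComplex.{u} where
  isEmpty_sk_zero : IsEmpty (sk 0)

/-- The inclusion of a skeleton into the next one. -/
noncomputable def RelativeCWComplex.inclusion (X : OldCW.RelativeCWComplex.{u}) (n : ℕ) :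
    X.sk n ⟶ X.sk (n + 1) :=
  Limits.pushout.inr _ _ ≫ (X.attachCells n).iso_pushout.inv

/-- The sequence of skeleta. -/
noncomputable def RelativeCWComplex.sequence (X : OldCW.RelativeCWComplex.{u}) : ℕ ⥤ TopCat.{u} :=
  Functor.ofSequence X.inclusion

/-- The underlying topological space of a relative CW-complex. -/
noncomputable def RelativeCWComplex.toTopCat (X : OldCW.RelativeCWComplex.{u}) : TopCat.{u} :=
  Limits.colimit X.sequence

end OldCW

/-- `K` (with its topology) carries the structure of a CW-complex. -/
def IsCWComplexSpace (K : Type u) [TopologicalSpace K] : Prop :=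
  ∃ C : OldCW.CWComplex.{u}, Nonempty (K ≃ₜ C.toRelativeCWComplex.toTopCat)

/-- `K` carries the structure of a countable CW-complex (countably many cells). -/
def IsCountableCWComplexSpace (K : Type u) [TopologicalSpace K] : Prop :=
  ∃ C : OldCW.CWComplex.{u}, (∀ n : ℕ, Countable (C.toRelativeCWComplex.attachCells n).cells) ∧
    Nonempty (K ≃ₜ C.toRelativeCWComplex.toTopCat)


open unitInterval in
theorem memAlpha_of_homotopyEquiv {X : Type u} {K L : Type v} [TopologicalSpace X]
    [NormalSpace X] [TopologicalSpace K] [TopologicalSpace L]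
    (e : ContinuousMap.HomotopyEquiv K L) (hK : MemAlpha X K) : MemAlpha X L := by
  classical
  rintro A hA f hf ⟨U, hUopen, hAU, g, hg, hgf⟩
  obtain ⟨V, hVopen, hAV, hVU⟩ := normal_exists_closure_subset hA hUopen hAU
  set B : Set X := closure V with hBdef
  have hB : IsClosed B := isClosed_closure
  have hBU : B ⊆ U := hVU
  have hVB : V ⊆ B := subset_closure
  -- Urysohn function
  obtain ⟨uc, huc0, huc1, hucIcc⟩ := exists_continuous_zero_one_of_isClosed
    (isClosed_compl_iff.mpr hVopen) hA (disjoint_compl_left.mono_right hAV)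
  set u : X → I := fun x => Set.projIcc (0 : ℝ) 1 zero_le_one (uc x) with hu
  have hucont : Continuous u := continuous_projIcc.comp uc.continuous
  have hu1 : ∀ a ∈ A, u a = 1 := by
    intro a ha
    simp only [hu, huc1 ha, Pi.one_apply]
    exact Set.projIcc_right _
  have hu0 : ∀ x ∉ V, u x = 0 := by
    intro x hx
    simp only [hu, huc0 (Set.mem_compl hx), Pi.zero_apply]
    exact Set.projIcc_left _
  -- extend (e.invFun ∘ g) over all of X using hK
  have hgB : Continuous fun b : B => e.invFun (g ⟨b.1, hBU b.2⟩) :=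
    e.invFun.continuous.comp (hg.comp (Continuous.subtype_mk continuous_subtype_val _))
  obtain ⟨h, hhcont, hhB⟩ := hK B hB (fun b : B => e.invFun (g ⟨b.1, hBU b.2⟩)) hgB
    ⟨U, hUopen, hBU, fun x => e.invFun (g x),
      e.invFun.continuous.comp hg, fun _ => rfl⟩
  -- the homotopy from e.toFun ∘ e.invFun to id
  obtain ⟨H⟩ := e.right_inv
  set f₁ : X → L := fun x => if hx : x ∈ U then H (u x, g ⟨x, hx⟩) else e.toFun (h x)
    with hf₁
  set f₂ : X → L := fun x => e.toFun (h x) with hf₂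
  have hf₂cont : Continuous f₂ := e.toFun.continuous.comp hhcont
  have hf₁U : ContinuousOn f₁ U := by
    rw [continuousOn_iff_continuous_restrict]
    have : U.restrict f₁ = fun x : U => H (u x.1, g x) := by
      funext x
      exact dif_pos x.2
    change Continuous (U.restrict f₁); rw [this]
    exact H.continuous.comp ((hucont.comp continuous_subtype_val).prodMk hg)
  have key : ∀ x ∈ B, x ∉ V → f₁ x = f₂ x := by
    intro x hxB hxV
    have hxU : x ∈ U := hBU hxB
    have : h x = e.invFun (g ⟨x, hxU⟩) := hhB ⟨x, hxB⟩
    simp only [hf₁, dif_pos hxU, hu0 x hxV, hf₂, this]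
    exact H.apply_zero _
  refine ⟨B.piecewise f₁ f₂, ?_, ?_⟩
  · refine continuous_piecewise ?_ (hf₁U.mono ?_) (hf₂cont.continuousOn)
    · intro x hx
      have hxB : x ∈ B := hB.frontier_subset hx
      have hxV : x ∉ V := fun hxV =>
        hx.2 (interior_maximal hVB hVopen hxV)
      exact key x hxB hxV
    · rw [hB.closure_eq]
      exact hBU
  · intro a
    have haB : (a : X) ∈ B := hVB (hAV a.2)
    rw [Set.piecewise_eq_of_mem _ _ _ haB]
    have haU : (a : X) ∈ U := hAU a.2
    simp only [hf₁, dif_pos haU, hu1 a a.2]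
    have h1 : H (1, g ⟨(a : X), haU⟩) = g ⟨(a : X), haU⟩ := H.apply_one _
    rw [h1]
    exact hgf a

/-- If `K` and `L` are homotopy equivalent spaces and `X` is normal,
then `X ∈ α(L)` iff `X ∈ α(K)`. -/
theorem statement0 {X : Type u} {K L : Type v} [TopologicalSpace X] [NormalSpace X]
    [TopologicalSpace K] [TopologicalSpace L]
    (hKL : Nonempty (ContinuousMap.HomotopyEquiv K L)) :
    MemAlpha X L ↔ MemAlpha X K := by
  obtain ⟨e⟩ := hKL
  exact ⟨memAlpha_of_homotopyEquiv e.symm, memAlpha_of_homotopyEquiv e⟩
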